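/- Let G be a finite simple graph with n vertices, maximum degree Δ, and chromatic number χ. Let I and J be independent sets of G with |I| = |J|, and let μ be an integer with 1 ≤ μ and 2μ ≤ |I|. If n − 2μ(Δ + 1) ≥ χ · (|I| − μ), then I and J are reconfigurable under (|I| − μ)-TJ; moreover, there is a reconfiguration sequence between them of length at most 3. -/

import Mathlib

/-- A set of vertices is independent: no two of its vertices are adjacent. -/
def IndepSet {α : Type*} (G : SimpleGraph α) (S : Finset α) : Prop :=
  ∀ ⦃u⦄, u ∈ S → ∀ ⦃v⦄, v ∈ S → ¬ G.Adj u v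

/-- `f 0, f 1, …, f ℓ` is a reconfiguration sequence of independent sets from `I` to `J`
under the `k`-Token-Jumping rule. -/
def IsTJSeq {α : Type*} [DecidableEq α] (G : SimpleGraph α) (k : ℕ) (I J : Finset α)
    (f : ℕ → Finset α) (ℓ : ℕ) : Prop :=
  f 0 = I ∧ f ℓ = J ∧ (∀ i ≤ ℓ, IndepSet G (f i) ∧ (f i).card = I.card) ∧
    ∀ i < ℓ, (symmDiff (f i) (f (i + 1))).card ≤ 2 * k

theorem stmt4 {V : Type*} [Fintype V] [DecidableEq V] (G : SimpleGraph V)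
    [DecidableRel G.Adj] (Δ χ : ℕ) (hΔ : Δ = G.maxDegree)
    (hχ : G.chromaticNumber = (χ : ℕ∞))
    (I J : Finset V) (hI : IndepSet G I) (hJ : IndepSet G J) (hIJ : I.card = J.card)
    (μ : ℕ) (hμ1 : 1 ≤ μ) (hμ2 : 2 * μ ≤ I.card)
    (hmain : χ * (I.card - μ) + 2 * μ * (Δ + 1) ≤ Fintype.card V) :
    ∃ (f : ℕ → Finset V) (ℓ : ℕ), ℓ ≤ 3 ∧ IsTJSeq G (I.card - μ) I J f ℓ := by
  classical
  set k := I.card - μ with hk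
  have hcol : G.Colorable χ := by
    rw [← SimpleGraph.chromaticNumber_le_iff_colorable, hχ]
  obtain ⟨c⟩ := hcol
  have hχpos : 0 < χ := by
    rcases Nat.eq_zero_or_pos χ with h | h
    · subst h
      have : IsEmpty V := ⟨fun v => (c v).elim0⟩
      simp [Fintype.card_eq_zero] at hmain
      omega
    · exact h
  have hμI : μ ≤ I.card := by omega
  have hμJ : μ ≤ J.card := by omega
  obtain ⟨A, hA, hAcard⟩ := Finset.exists_subset_card_eq hμI
  obtain ⟨B, hB, hBcard⟩ := Finset.exists_subset_card_eq hμJ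
  set N : Finset V := (A ∪ B).biUnion (fun a => insert a (G.neighborFinset a)) with hN
  have hNcard : N.card ≤ 2 * μ * (Δ + 1) := by
    calc N.card ≤ (A ∪ B).card * (Δ + 1) := by
          apply Finset.card_biUnion_le_card_mul
          intro a _
          calc (insert a (G.neighborFinset a)).card ≤ (G.neighborFinset a).card + 1 :=
                Finset.card_insert_le _ _
            _ ≤ Δ + 1 := by
                have := G.degree_le_maxDegree a
                rw [SimpleGraph.card_neighborFinset_eq_degree]
                omega
      _ ≤ 2 * μ * (Δ + 1) := by
          have : (A ∪ B).card ≤ 2 * μ := by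
            have := Finset.card_union_le A B
            omega
          exact Nat.mul_le_mul_right _ this
  set S : Finset V := Finset.univ \ N with hS
  have hScard : χ * k ≤ S.card := by
    have : S.card = Fintype.card V - N.card := by
      rw [hS, Finset.card_sdiff_of_subset (Finset.subset_univ N), Finset.card_univ]
    omega
  -- pigeonhole: some color class in S has ≥ k elements
  obtain ⟨y, -, hy⟩ := Finset.exists_le_card_fiber_of_mul_le_card_of_maps_to
    (f := fun v => c v) (t := (Finset.univ : Finset (Fin χ)))
    (fun a _ => Finset.mem_univ _) (Finset.univ_nonempty_iff.2 ⟨⟨0, hχpos⟩⟩)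
    (by simpa using hScard)
  obtain ⟨C, hC, hCcard⟩ := Finset.exists_subset_card_eq hy
  have hCS : ∀ x ∈ C, x ∉ N ∧ c x = y := by
    intro x hx
    have := hC hx
    simp only [Finset.mem_filter, hS, Finset.mem_sdiff, Finset.mem_univ, true_and] at this
    exact ⟨this.1, this.2⟩
  -- C is independent
  have hCindep : IndepSet G C := by
    intro u hu v hv hadj
    have h1 := (hCS u hu).2
    have h2 := (hCS v hv).2
    exact c.valid hadj (h1.trans h2.symm)
  -- no vertex of C is in A ∪ B or adjacent to a vertex of A ∪ B
  have hCN : ∀ x ∈ C, ∀ a ∈ A ∪ B, x ≠ a ∧ ¬ G.Adj a x := by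
    intro x hx a ha
    have hxN := (hCS x hx).1
    constructor
    · intro h
      exact hxN (Finset.mem_biUnion.2 ⟨a, ha, by simp [h]⟩)
    · intro hadj
      exact hxN (Finset.mem_biUnion.2 ⟨a, ha,
        Finset.mem_insert_of_mem ((G.mem_neighborFinset a x).2 hadj)⟩)
  have hdisjAC : Disjoint A C := by
    rw [Finset.disjoint_right]
    intro x hx hxA
    exact (hCN x hx x (Finset.mem_union_left _ hxA)).1 rfl
  have hdisjBC : Disjoint B C := by
    rw [Finset.disjoint_right]
    intro x hx hxB
    exact (hCN x hx x (Finset.mem_union_right _ hxB)).1 rfl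
  have hACindep : IndepSet G (A ∪ C) := by
    intro u hu v hv hadj
    rcases Finset.mem_union.1 hu with hu | hu <;> rcases Finset.mem_union.1 hv with hv | hv
    · exact hI (hA hu) (hA hv) hadj
    · exact (hCN v hv u (Finset.mem_union_left _ hu)).2 hadj
    · exact (hCN u hu v (Finset.mem_union_left _ hv)).2 hadj.symm
    · exact hCindep hu hv hadj
  have hBCindep : IndepSet G (B ∪ C) := by
    intro u hu v hv hadj
    rcases Finset.mem_union.1 hu with hu | hu <;> rcases Finset.mem_union.1 hv with hv | hv
    · exact hJ (hB hu) (hB hv) hadj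
    · exact (hCN v hv u (Finset.mem_union_right _ hu)).2 hadj
    · exact (hCN u hu v (Finset.mem_union_right _ hv)).2 hadj.symm
    · exact hCindep hu hv hadj
  have hACcard : (A ∪ C).card = I.card := by
    rw [Finset.card_union_of_disjoint hdisjAC, hAcard, hCcard]
    omega
  have hBCcard : (B ∪ C).card = I.card := by
    rw [Finset.card_union_of_disjoint hdisjBC, hBcard, hCcard]
    omega
  -- the sequence
  refine ⟨fun i => if i = 0 then I else if i = 1 then A ∪ C else if i = 2 then B ∪ C else J,
    3, le_refl 3, ?_, ?_, ?_, ?_⟩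
  · simp
  · simp
  · intro i hi
    interval_cases i <;> simp [hI, hJ, hACindep, hBCindep, hACcard, hBCcard, hIJ.symm]
  · intro i hi
    have hIA : (I \ A).card = k := by rw [Finset.card_sdiff_of_subset hA, hAcard]
    have hJB : (J \ B).card = k := by rw [Finset.card_sdiff_of_subset hB, hBcard]; omega
    interval_cases i
    · -- I → A ∪ C
      simp only [if_pos rfl, if_neg one_ne_zero, if_pos rfl, Nat.reduceEqDiff]
      have hsub : symmDiff I (A ∪ C) ⊆ (I \ A) ∪ C := by
        intro x hx
        rw [Finset.mem_symmDiff] at hx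
        simp only [Finset.mem_union, Finset.mem_sdiff]
        rcases hx with ⟨h1, h2⟩ | ⟨h1, h2⟩
        · simp only [Finset.mem_union, not_or] at h2
          exact Or.inl ⟨h1, h2.1⟩
        · rcases Finset.mem_union.1 h1 with h | h
          · exact absurd (hA h) h2
          · exact Or.inr h
      calc (symmDiff I (A ∪ C)).card ≤ ((I \ A) ∪ C).card := Finset.card_le_card hsub
        _ ≤ (I \ A).card + C.card := Finset.card_union_le _ _
        _ ≤ 2 * k := by omega
    · -- A ∪ C → B ∪ C
      simp only [Nat.reduceEqDiff, if_neg one_ne_zero, if_pos rfl, if_neg (by norm_num : (2:ℕ) ≠ 0),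
        if_neg (by norm_num : (2:ℕ) ≠ 1)]
      have hsub : symmDiff (A ∪ C) (B ∪ C) ⊆ A ∪ B := by
        intro x hx
        rw [Finset.mem_symmDiff] at hx
        simp only [Finset.mem_union, not_or] at hx ⊢
        tauto
      calc (symmDiff (A ∪ C) (B ∪ C)).card ≤ (A ∪ B).card := Finset.card_le_card hsub
        _ ≤ A.card + B.card := Finset.card_union_le _ _
        _ ≤ 2 * k := by omega
    · -- B ∪ C → J
      simp only [Nat.reduceEqDiff, if_neg (by norm_num : (2:ℕ) ≠ 0),
        if_neg (by norm_num : (2:ℕ) ≠ 1), if_pos rfl, if_neg (by norm_num : (3:ℕ) ≠ 0),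
        if_neg (by norm_num : (3:ℕ) ≠ 1), if_neg (by norm_num : (3:ℕ) ≠ 2)]
      have hsub : symmDiff (B ∪ C) J ⊆ C ∪ (J \ B) := by
        intro x hx
        rw [Finset.mem_symmDiff] at hx
        simp only [Finset.mem_union, Finset.mem_sdiff, not_or] at hx ⊢
        tauto
      calc (symmDiff (B ∪ C) J).card ≤ (C ∪ (J \ B)).card := Finset.card_le_card hsub
        _ ≤ C.card + (J \ B).card := Finset.card_union_le _ _
        _ ≤ 2 * k := by omega
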